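/- There is no positive integer m satisfying 28350m^4 + 18900m^3 + 2700m^2 - 225m - 30 = 50625m^8. -/

import Mathlib

theorem stmt0 : ¬ ∃ m : ℤ, 0 < m ∧
    28350*m^4 + 18900*m^3 + 2700*m^2 - 225*m - 30 = 50625*m^8 := by
  rintro ⟨m, hm, h⟩
  rcases eq_or_lt_of_le (show (1:ℤ) ≤ m by omega) with h1 | h2
  · omega
  · have a : (2:ℤ) ≤ m := by linarith
    have h4 : (16:ℤ) ≤ m^4 := by nlinarith [sq_nonneg m, sq_nonneg (m-2), sq_nonneg (m^2-4), mul_pos hm hm]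
    have h8 : 16*m^4 ≤ m^8 := by nlinarith [pow_pos hm 4, sq_nonneg (m^4)]
    have h3 : m^3 ≤ m^4 := by nlinarith [pow_pos hm 3]
    have hmm : m^2 ≤ m^4 := by nlinarith [pow_pos hm 2]
    have h1 : m ≤ m^4 := by nlinarith
    nlinarith [pow_pos hm 4]
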